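/- arXiv:1710.00798 — 3 statements merged into one kernel-verified Lean document; each statement's English description precedes it below -/
import Mathlib

section
/- Let Ω ⊆ ℝ^d be open and bounded and V a real Banach space with topological dual V*. If u : Ω → V is weakly measurable (i.e., x ↦ ⟨q, u(x)⟩ is Lebesgue-measurable for every q ∈ V*) and p : Ω → V* is weak*-continuous (i.e., for every v ∈ V the map x ↦ ⟨p(x), v⟩ is continuous), then the map x ↦ ⟨p(x), u(x)⟩ is Lebesgue-measurable on Ω. -/
open MeasureTheory

/-- Let `Ω ⊆ ℝ^d` be open and bounded and `V` a real Banach space with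
topological dual `V*`. If `u : Ω → V` is weakly measurable (i.e. `x ↦ ⟨q, u x⟩` is measurable
for every `q ∈ V*`) and `p : Ω → V*` is weak*-continuous (i.e. for every `v ∈ V` the map
`x ↦ ⟨p x, v⟩` is continuous), then `x ↦ ⟨p x, u x⟩` is measurable on `Ω`. -/
theorem stmt0 {d : ℕ} (Ω : Set (EuclideanSpace ℝ (Fin d)))
    (hΩo : IsOpen Ω) (hΩb : Bornology.IsBounded Ω)
    (V : Type*) [NormedAddCommGroup V] [NormedSpace ℝ V] [CompleteSpace V]
    (u : Ω → V) (p : Ω → StrongDual ℝ V)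
    (hu : ∀ q : StrongDual ℝ V, Measurable fun x : Ω => q (u x))
    (hp : ∀ v : V, Continuous fun x : Ω => p x v) :
    Measurable fun x : Ω => p x (u x) := by
  have h := measurable_uncurry_of_continuous_of_measurable
    (u := fun (i : Ω) (x : Ω) => p i (u x)) (fun x => hp (u x)) (fun i => hu (p i))
  exact h.comp (measurable_id.prodMk measurable_id)
end

section
/- Let Ω ⊆ ℝ^d be open and bounded, V a real Banach space, and ‖·‖_{(V*)^d} a norm on (V*)^d satisfying the rotational invariance property ‖p‖_{(V*)^d} = ‖Rp‖_{(V*)^d} for all p ∈ (V*)^d and all R ∈ SO(d), where (Rp)_i := Σ_{j=1}^d R_{ij} p_j ∈ V*. Then TV_V is rotationally invariant: for every u ∈ L_w^∞(Ω, V), every R ∈ SO(d), and ũ : R^TΩ → V defined by ũ(x) := u(Rx), one has TV_V(u) = TV_V(ũ) (with TV_V(ũ) computed over the rotated domain R^TΩ := { R^T x : x ∈ Ω }). -/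
open MeasureTheory ENNReal Matrix

/-- The divergence `div p (x) = ∑ i, ∂_i p_i (x) ∈ V*` of `p : Ω → (V*)^d`. -/
noncomputable def divD {d : ℕ} {W : Type*} [NormedAddCommGroup W] [NormedSpace ℝ W]
    (p : EuclideanSpace ℝ (Fin d) → Fin d → W) (x : EuclideanSpace ℝ (Fin d)) : W :=
  ∑ i, fderiv ℝ (fun y => p y i) x (EuclideanSpace.single i 1)

/-- The total variation of a Banach space-valued function `u` on the domain `Ω ⊆ ℝ^d`,
relative to a given (product) norm `N` on `(V*)^d`:
`TV_V(u) = sup { ∫_Ω ⟨−div p(x), u(x)⟩ dx : p ∈ C¹_c(Ω,(V*)^d), N (p x) ≤ 1 ∀ x }`. -/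
noncomputable def TVb {d : ℕ} {V : Type*} [NormedAddCommGroup V] [NormedSpace ℝ V]
    (N : (Fin d → StrongDual ℝ V) → ℝ)
    (Ω : Set (EuclideanSpace ℝ (Fin d))) (u : EuclideanSpace ℝ (Fin d) → V) : ℝ :=
  sSup { r : ℝ | ∃ p : EuclideanSpace ℝ (Fin d) → Fin d → StrongDual ℝ V,
    ContDiff ℝ 1 p ∧ HasCompactSupport p ∧ tsupport p ⊆ Ω ∧
    (∀ x : EuclideanSpace ℝ (Fin d), N (p x) ≤ 1) ∧
    r = ∫ x in Ω, -(divD p x (u x)) }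

/-- The action of a matrix `R` on a vector `x ∈ ℝ^d`. -/
noncomputable def matVec {d : ℕ} (R : Matrix (Fin d) (Fin d) ℝ)
    (x : EuclideanSpace ℝ (Fin d)) : EuclideanSpace ℝ (Fin d) :=
  (EuclideanSpace.equiv (Fin d) ℝ).symm (R.mulVec (EuclideanSpace.equiv (Fin d) ℝ x))

namespace Stmt4Aux

variable {d : ℕ}

/-- `matVec S` as a continuous linear map. -/
noncomputable def mvL (S : Matrix (Fin d) (Fin d) ℝ) :
    EuclideanSpace ℝ (Fin d) →L[ℝ] EuclideanSpace ℝ (Fin d) :=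
  LinearMap.toContinuousLinearMap (Matrix.toEuclideanLin S)

lemma mvL_apply (S : Matrix (Fin d) (Fin d) ℝ) (x : EuclideanSpace ℝ (Fin d)) :
    mvL S x = matVec S x := rfl

lemma matVec_matVec (S T : Matrix (Fin d) (Fin d) ℝ) (x : EuclideanSpace ℝ (Fin d)) :
    matVec S (matVec T x) = matVec (S * T) x := by
  simp [matVec, Matrix.mulVec_mulVec]
  exact Matrix.mulVec_mulVec (EuclideanSpace.equiv (Fin d) ℝ x) S T

lemma matVec_one (x : EuclideanSpace ℝ (Fin d)) : matVec (1 : Matrix (Fin d) (Fin d) ℝ) x = x := by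
  simp [matVec]

lemma matVec_continuous (S : Matrix (Fin d) (Fin d) ℝ) : Continuous (matVec S) := by
  have : matVec S = mvL S := rfl
  rw [this]; exact (mvL S).continuous

/-- `matVec S` as a homeomorphism when `S` is invertible with inverse `Sᵀ`. -/
noncomputable def mvHomeo (S : Matrix (Fin d) (Fin d) ℝ) (h1 : S * Sᵀ = 1) (h2 : Sᵀ * S = 1) :
    EuclideanSpace ℝ (Fin d) ≃ₜ EuclideanSpace ℝ (Fin d) where
  toFun := matVec S
  invFun := matVec Sᵀ
  left_inv := fun x => by rw [matVec_matVec, h2, matVec_one]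
  right_inv := fun x => by rw [matVec_matVec, h1, matVec_one]
  continuous_toFun := matVec_continuous S
  continuous_invFun := matVec_continuous Sᵀ

lemma det_toEuclideanLin (S : Matrix (Fin d) (Fin d) ℝ) :
    LinearMap.det ((Matrix.toEuclideanLin S :
      EuclideanSpace ℝ (Fin d) →ₗ[ℝ] EuclideanSpace ℝ (Fin d))) = S.det := by
  have e : (Matrix.toEuclideanLin S :
      EuclideanSpace ℝ (Fin d) →ₗ[ℝ] EuclideanSpace ℝ (Fin d)) =
      (((WithLp.linearEquiv 2 ℝ (Fin d → ℝ)).symm : (Fin d → ℝ) ≃ₗ[ℝ] EuclideanSpace ℝ (Fin d)) :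
        (Fin d → ℝ) →ₗ[ℝ] EuclideanSpace ℝ (Fin d)) ∘ₗ Matrix.toLin' S ∘ₗ
      ((((WithLp.linearEquiv 2 ℝ (Fin d → ℝ)).symm).symm :
        EuclideanSpace ℝ (Fin d) ≃ₗ[ℝ] (Fin d → ℝ)) :
          EuclideanSpace ℝ (Fin d) →ₗ[ℝ] (Fin d → ℝ)) := rfl
  rw [e, LinearMap.det_conj, LinearMap.det_toLin']

lemma matVec_measurePreserving (S : Matrix (Fin d) (Fin d) ℝ) (h : S.det = 1) :
    MeasurePreserving (matVec S) (volume : Measure (EuclideanSpace ℝ (Fin d))) volume := by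
  refine ⟨(matVec_continuous S).measurable, ?_⟩
  have hdet : LinearMap.det ((Matrix.toEuclideanLin S :
      EuclideanSpace ℝ (Fin d) →ₗ[ℝ] EuclideanSpace ℝ (Fin d))) = 1 := by
    rw [det_toEuclideanLin, h]
  have hmap := Measure.map_linearMap_addHaar_eq_smul_addHaar
    (volume : Measure (EuclideanSpace ℝ (Fin d))) (f := (Matrix.toEuclideanLin S : _ →ₗ[ℝ] _))
    (by rw [hdet]; norm_num)
  have hfun : (⇑(Matrix.toEuclideanLin S : EuclideanSpace ℝ (Fin d) →ₗ[ℝ] _)) = matVec S := rfl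
  rw [hfun, hdet] at hmap
  simpa using hmap

lemma matVec_single (S : Matrix (Fin d) (Fin d) ℝ) (i : Fin d) :
    matVec S (EuclideanSpace.single i 1) = ∑ k, S k i • EuclideanSpace.single k 1 := by
  ext k
  rw [WithLp.ofLp_sum, Finset.sum_apply]
  simp [matVec, Matrix.mulVec, dotProduct, EuclideanSpace.single_apply, mul_comm]

variable {W : Type*} [NormedAddCommGroup W] [NormedSpace ℝ W]

lemma fderiv_comp_matVec (f : EuclideanSpace ℝ (Fin d) → W) (hf : Differentiable ℝ f)
    (S : Matrix (Fin d) (Fin d) ℝ) (x v : EuclideanSpace ℝ (Fin d)) :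
    fderiv ℝ (fun y => f (matVec S y)) x v = fderiv ℝ f (matVec S x) (matVec S v) := by
  have e : (fun y => f (matVec S y)) = f ∘ (mvL S) := rfl
  rw [e, fderiv_comp x (hf (mvL S x)) (mvL S).differentiableAt, (mvL S).fderiv]
  rfl

lemma divD_comp (p : EuclideanSpace ℝ (Fin d) → Fin d → W) (hp : ContDiff ℝ 1 p)
    (S : Matrix (Fin d) (Fin d) ℝ) (h1 : S * Sᵀ = 1) (x : EuclideanSpace ℝ (Fin d)) :
    divD (fun y i => ∑ j, S j i • p (matVec S y) j) x = divD p (matVec S x) := by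
  have hpj : ∀ j, Differentiable ℝ (fun y => p y j) := fun j =>
    ((contDiff_pi.mp hp) j).differentiable one_ne_zero
  have hcomp : ∀ j, Differentiable ℝ (fun y => p (matVec S y) j) := by
    intro j
    have : (fun y => p (matVec S y) j) = (fun y => p y j) ∘ (mvL S) := rfl
    rw [this]
    exact (hpj j).comp (mvL S).differentiable
  have key : ∀ i j, fderiv ℝ (fun y => p (matVec S y) j) x (EuclideanSpace.single i 1)
      = ∑ k, S k i • fderiv ℝ (fun y => p y j) (matVec S x) (EuclideanSpace.single k 1) := by
    intro i j
    rw [fderiv_comp_matVec _ (hpj j) S x, matVec_single, map_sum]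
    exact Finset.sum_congr rfl fun k _ => by rw [_root_.map_smul]
  have step1 : ∀ i, fderiv ℝ (fun y => ∑ j, S j i • p (matVec S y) j) x
        (EuclideanSpace.single i 1)
      = ∑ j, S j i • fderiv ℝ (fun y => p (matVec S y) j) x (EuclideanSpace.single i 1) := by
    intro i
    rw [fderiv_fun_sum (A := fun j y => S j i • p (matVec S y) j) (fun j _ => ((hcomp j).differentiableAt).const_smul (S j i))]
    rw [ContinuousLinearMap.sum_apply]
    refine Finset.sum_congr rfl fun j _ => ?_
    rw [fderiv_fun_const_smul ((hcomp j).differentiableAt) (S j i)]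
    rfl
  unfold divD
  calc ∑ i, fderiv ℝ (fun y => (fun y i => ∑ j, S j i • p (matVec S y) j) y i) x
        (EuclideanSpace.single i 1)
      = ∑ i, ∑ j, ∑ k, (S j i * S k i) •
          fderiv ℝ (fun y => p y j) (matVec S x) (EuclideanSpace.single k 1) := by
        refine Finset.sum_congr rfl fun i _ => ?_
        rw [step1 i]
        refine Finset.sum_congr rfl fun j _ => ?_
        rw [key i j, Finset.smul_sum]
        exact Finset.sum_congr rfl fun k _ => by rw [smul_smul]
    _ = ∑ j, ∑ k, (∑ i, S j i * S k i) •
          fderiv ℝ (fun y => p y j) (matVec S x) (EuclideanSpace.single k 1) := by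
        rw [Finset.sum_comm]
        refine Finset.sum_congr rfl fun j _ => ?_
        rw [Finset.sum_comm, ← Finset.sum_congr rfl fun k _ => (Finset.sum_smul).symm]
    _ = ∑ j, fderiv ℝ (fun y => p y j) (matVec S x) (EuclideanSpace.single j 1) := by
        refine Finset.sum_congr rfl fun j _ => ?_
        have : ∀ k, (∑ i, S j i * S k i) = if j = k then (1 : ℝ) else 0 := by
          intro k
          have : (∑ i, S j i * S k i) = (S * Sᵀ) j k := by
            rw [Matrix.mul_apply]
            exact Finset.sum_congr rfl fun i _ => by rw [Matrix.transpose_apply]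
          rw [this, h1, Matrix.one_apply]
        simp only [this]
        simp
end Stmt4Aux

namespace Stmt4Aux

lemma key_subset {d : ℕ} {V : Type*} [NormedAddCommGroup V] [NormedSpace ℝ V]
    (N : (Fin d → StrongDual ℝ V) → ℝ)
    (hN_rot : ∀ S : Matrix (Fin d) (Fin d) ℝ, S * Sᵀ = 1 → Sᵀ * S = 1 → S.det = 1 →
      ∀ p : Fin d → StrongDual ℝ V, N (fun i => ∑ j, S i j • p j) = N p)
    (Ω Ω' : Set (EuclideanSpace ℝ (Fin d)))
    (u u' : EuclideanSpace ℝ (Fin d) → V)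
    (S : Matrix (Fin d) (Fin d) ℝ) (h1 : S * Sᵀ = 1) (h2 : Sᵀ * S = 1) (h3 : S.det = 1)
    (hΩ' : Ω' = matVec Sᵀ '' Ω) (hu' : ∀ x, u' x = u (matVec S x)) :
    { r : ℝ | ∃ p : EuclideanSpace ℝ (Fin d) → Fin d → StrongDual ℝ V,
      ContDiff ℝ 1 p ∧ HasCompactSupport p ∧ tsupport p ⊆ Ω ∧
      (∀ x : EuclideanSpace ℝ (Fin d), N (p x) ≤ 1) ∧
      r = ∫ x in Ω, -(divD p x (u x)) } ⊆
    { r : ℝ | ∃ p : EuclideanSpace ℝ (Fin d) → Fin d → StrongDual ℝ V,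
      ContDiff ℝ 1 p ∧ HasCompactSupport p ∧ tsupport p ⊆ Ω' ∧
      (∀ x : EuclideanSpace ℝ (Fin d), N (p x) ≤ 1) ∧
      r = ∫ x in Ω', -(divD p x (u' x)) } := by
  subst hΩ'
  rintro r ⟨p, hp1, hp2, hp3, hp4, rfl⟩
  set q : EuclideanSpace ℝ (Fin d) → Fin d → StrongDual ℝ V :=
    fun y i => ∑ j, S j i • p (matVec S y) j with hq
  have himg : ∀ t : Set (EuclideanSpace ℝ (Fin d)), matVec Sᵀ '' t = matVec S ⁻¹' t := by
    intro t
    exact congrFun (Set.image_eq_preimage_of_inverse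
      (fun x => by rw [matVec_matVec, h1, matVec_one])
      (fun x => by rw [matVec_matVec, h2, matVec_one])) t
  have hqC : ContDiff ℝ 1 q := by
    refine contDiff_pi.mpr fun i => ContDiff.sum fun j _ => ?_
    have hcomp : ContDiff ℝ 1 (fun y => p (matVec S y) j) :=
      (contDiff_pi.mp hp1 j).comp (mvL S).contDiff
    exact hcomp.const_smul (S j i)
  have hsupp : Function.support q ⊆ matVec S ⁻¹' (tsupport p) := by
    intro y hy
    by_contra hc
    apply hy
    have hz : p (matVec S y) = 0 := image_eq_zero_of_notMem_tsupport hc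
    funext i
    simp [hq, hz]
  have htsub : tsupport q ⊆ matVec S ⁻¹' (tsupport p) :=
    closure_minimal hsupp ((isClosed_tsupport p).preimage (matVec_continuous S))
  have hcpt : IsCompact (matVec S ⁻¹' (tsupport p)) :=
    (mvHomeo S h1 h2).isCompact_preimage.mpr hp2
  have hqHCS : HasCompactSupport q :=
    IsCompact.of_isClosed_subset hcpt isClosed_closure htsub
  have hqsupp : tsupport q ⊆ matVec Sᵀ '' Ω := by
    rw [himg]
    exact htsub.trans (Set.preimage_mono hp3)
  have hqnorm : ∀ x, N (q x) ≤ 1 := by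
    intro x
    have hrot := hN_rot Sᵀ (by rw [Matrix.transpose_transpose]; exact h2)
      (by rw [Matrix.transpose_transpose]; exact h1)
      (by rw [Matrix.det_transpose]; exact h3) (p (matVec S x))
    have : N (q x) = N (p (matVec S x)) := by
      have hfun : (q x) = fun i => ∑ j, Sᵀ i j • p (matVec S x) j := by
        funext i
        simp [hq, Matrix.transpose_apply]
      rw [hfun, hrot]
    rw [this]
    exact hp4 _
  refine ⟨q, hqC, hqHCS, hqsupp, hqnorm, ?_⟩
  have hdiv : ∀ x, divD q x = divD p (matVec S x) := divD_comp p hp1 S h1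
  have hint : (fun x => -(divD q x (u' x))) =
      fun x => (fun y => -(divD p y (u y))) (matVec S x) := by
    funext x
    rw [hdiv x, hu' x]
  rw [himg, hint,
    (matVec_measurePreserving S h3).setIntegral_preimage_emb
      (mvHomeo S h1 h2).measurableEmbedding (fun y => -(divD p y (u y))) Ω]

end Stmt4Aux

/-- If the product norm `N` on `(V*)^d` is rotationally invariant, i.e.
`N(p) = N(Rp)` with `(Rp)_i = ∑ j, R_{ij} p_j` for all `R ∈ SO(d)`, then `TV_V` is
rotationally invariant: for `u ∈ L_w^∞(Ω, V)`, `R ∈ SO(d)` and `ũ(x) := u(Rx)` one has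
`TV_V(u) = TV_V(ũ)`, the latter computed over the rotated domain `R^TΩ`. -/
theorem stmt4 {d : ℕ} (Ω : Set (EuclideanSpace ℝ (Fin d)))
    (hΩo : IsOpen Ω) (hΩb : Bornology.IsBounded Ω)
    (V : Type*) [NormedAddCommGroup V] [NormedSpace ℝ V] [CompleteSpace V]
    (N : (Fin d → StrongDual ℝ V) → ℝ)
    -- `N` is a norm on `(V*)^d`:
    (hN_nonneg : ∀ p, 0 ≤ N p)
    (hN_add : ∀ p q, N (p + q) ≤ N p + N q)
    (hN_smul : ∀ (c : ℝ) p, N (c • p) = |c| * N p)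
    (hN_def : ∀ p, N p = 0 ↔ p = 0)
    -- rotational invariance of `N`:
    (hN_rot : ∀ S : Matrix (Fin d) (Fin d) ℝ, S * Sᵀ = 1 → Sᵀ * S = 1 → S.det = 1 →
      ∀ p : Fin d → StrongDual ℝ V, N (fun i => ∑ j, S i j • p j) = N p)
    -- `u ∈ L_w^∞(Ω, V)`:
    (u : EuclideanSpace ℝ (Fin d) → V)
    (hu_meas : ∀ q : StrongDual ℝ V, Measurable fun x : Ω => q (u x))
    (hu_bdd : essSup (fun x => (‖u x‖₊ : ℝ≥0∞)) (volume.restrict Ω) < ⊤)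
    -- `R ∈ SO(d)`:
    (R : Matrix (Fin d) (Fin d) ℝ) (hR : R * Rᵀ = 1) (hR' : Rᵀ * R = 1) (hRdet : R.det = 1) :
    TVb N Ω u = TVb N (matVec Rᵀ '' Ω) (fun x => u (matVec R x)) := by
  unfold TVb
  refine congrArg sSup (Set.Subset.antisymm ?_ ?_)
  · exact Stmt4Aux.key_subset N hN_rot Ω (matVec Rᵀ '' Ω) u (fun x => u (matVec R x))
      R hR hR' hRdet rfl (fun x => rfl)
  · refine Stmt4Aux.key_subset N hN_rot (matVec Rᵀ '' Ω) Ω (fun x => u (matVec R x)) u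
      Rᵀ (by rw [Matrix.transpose_transpose]; exact hR')
      (by rw [Matrix.transpose_transpose]; exact hR)
      (by rw [Matrix.det_transpose]; exact hRdet) ?_ ?_
    · rw [Matrix.transpose_transpose, Set.image_image]
      have : ∀ x, matVec R (matVec Rᵀ x) = x := fun x => by
        rw [Stmt4Aux.matVec_matVec, hR, Stmt4Aux.matVec_one]
      simp only [this, Set.image_id']
    · intro x
      show u x = u (matVec R (matVec Rᵀ x))
      rw [Stmt4Aux.matVec_matVec, hR, Stmt4Aux.matVec_one]
end

section
/- Let Ω ⊂ ℝ^d be open and bounded and (X,d) a compact metric space. Let u^k : Ω → P(X) (k ∈ ℕ) be weakly measurable and let u^∞ : Ω → M(X) be a weakly* measurable function into the finite signed Borel measures on X (i.e., x ↦ ∫_X f d(u^∞(x)) is measurable for all f ∈ C(X)) such that ∫_Ω φ(x) ∫_X f(z) d(u^k(x))(z) dx → ∫_Ω φ(x) ∫_X f(z) d(u^∞(x))(z) dx as k → ∞ for all φ ∈ L¹(Ω) and f ∈ C(X). Then for almost every x ∈ Ω, u^∞(x) is a nonnegative measure of total mass 1, i.e., u^∞(x) ∈ P(X) almost everywhere.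 -/
open MeasureTheory Filter Topology

attribute [local instance] MeasureTheory.Measure.Subtype.measureSpace

/-- The integral of `f` against a finite signed Borel measure `s`,
via the Jordan decomposition `s = s⁺ − s⁻`. -/
noncomputable def signedIntegral {X : Type*} [MeasurableSpace X]
    (s : MeasureTheory.SignedMeasure X) (f : X → ℝ) : ℝ :=
  (∫ z, f z ∂s.toJordanDecomposition.posPart) - ∫ z, f z ∂s.toJordanDecomposition.negPart

/-- If `∫ φ·gₖ → ∫ φ·G` for all integrable `φ`, and each `gₖ ≥ 0`, then `G ≥ 0` a.e. -/
lemma aux_ae_nonneg {α : Type*} [MeasurableSpace α] {μ : Measure α} [IsFiniteMeasure μ]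
    {g : ℕ → α → ℝ} {G : α → ℝ} (hG : Measurable G) (hg : ∀ k x, 0 ≤ g k x)
    (h : ∀ φ : α → ℝ, Integrable φ μ →
      Tendsto (fun k => ∫ x, φ x * g k x ∂μ) atTop (𝓝 (∫ x, φ x * G x ∂μ))) :
    0 ≤ᵐ[μ] G := by
  have key : ∀ n : ℕ, μ {x | G x ∈ Set.Icc (-(n+1 : ℝ)) (-(1/(n+1)))} = 0 := by
    intro n
    set E := {x | G x ∈ Set.Icc (-(n+1 : ℝ)) (-(1/(n+1)))} with hE
    have hEm : MeasurableSet E := hG measurableSet_Icc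
    have hφ : Integrable (E.indicator (fun _ => (1:ℝ))) μ :=
      (integrable_const (1:ℝ)).indicator hEm
    have hind : ∀ x, E.indicator (fun _ => (1:ℝ)) x * G x = E.indicator G x := by
      intro x
      by_cases hx : x ∈ E <;> simp [Set.indicator_of_mem, Set.indicator_of_notMem, hx]
    have hGint : IntegrableOn G E μ := by
      refine Integrable.mono' (integrable_const ((n:ℝ)+1)) hG.aestronglyMeasurable.restrict ?_
      filter_upwards [ae_restrict_mem hEm] with x hx
      rw [Real.norm_eq_abs, abs_le]
      constructor
      · exact hx.1
      · have h2 : G x ≤ -(1/(n+1)) := hx.2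
        have : (0:ℝ) < 1/(n+1) := by positivity
        linarith
    have hlim := h _ hφ
    simp only [hind] at hlim
    rw [integral_indicator hEm] at hlim
    have h0 : (0:ℝ) ≤ ∫ x in E, G x ∂μ := by
      refine ge_of_tendsto hlim (Eventually.of_forall fun k => ?_)
      refine integral_nonneg fun x => ?_
      exact mul_nonneg (Set.indicator_nonneg (fun _ _ => zero_le_one) x) (hg k x)
    have hle : ∫ x in E, G x ∂μ ≤ ∫ _ in E, (-(1/((n:ℝ)+1))) ∂μ := by
      refine setIntegral_mono_on hGint (integrable_const _) hEm fun x hx => hx.2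
    rw [setIntegral_const, measureReal_def] at hle
    by_contra hne
    have hpos : 0 < (μ E).toReal := by
      refine ENNReal.toReal_pos hne (measure_ne_top μ E)
    have : (μ E).toReal • (-(1/((n:ℝ)+1))) < 0 := by
      have : (0:ℝ) < 1/((n:ℝ)+1) := by positivity
      rw [smul_eq_mul]; nlinarith
    linarith
  have : {x | G x < 0} ⊆ ⋃ n : ℕ, {x | G x ∈ Set.Icc (-(n+1 : ℝ)) (-(1/(n+1)))} := by
    intro x hx
    simp only [Set.mem_setOf_eq] at hx
    obtain ⟨n, hn⟩ := exists_nat_gt (max (-G x - 1) (1 / (-G x) - 1))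
    refine Set.mem_iUnion.2 ⟨n, ?_, ?_⟩
    · have := (max_le_iff.1 hn.le).1; linarith [lt_of_le_of_lt (le_max_left (-G x - 1) _) hn]
    · have h2 : 1 / (-G x) - 1 < n := lt_of_le_of_lt (le_max_right _ _) hn
      have hpos : 0 < -G x := by linarith
      have h3 : 1 / (-G x) < (n:ℝ) + 1 := by linarith
      rw [div_lt_iff₀ hpos] at h3
      have : 1 / ((n:ℝ)+1) ≤ -G x := by
        rw [div_le_iff₀ (by positivity)]
        nlinarith
      linarith
  have hnull : μ {x | G x < 0} = 0 :=
    measure_mono_null this (by simpa using fun n => key n)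
  filter_upwards [measure_eq_zero_iff_ae_notMem.1 hnull] with x hx
  simpa using not_lt.1 (show ¬ G x < 0 from hx)

/-- If `y ≠ 0` there is `n` with `1/(n+1) ≤ |y| ≤ n+1`. -/
lemma aux_exists_nat_abs {y : ℝ} (hy : y ≠ 0) :
    ∃ n : ℕ, 1/((n:ℝ)+1) ≤ |y| ∧ |y| ≤ (n:ℝ)+1 := by
  have hpos : 0 < |y| := abs_pos.2 hy
  obtain ⟨n, hn⟩ := exists_nat_gt (max (|y| - 1) (1 / |y| - 1))
  refine ⟨n, ?_, ?_⟩
  · have h2 : 1 / |y| - 1 < n := lt_of_le_of_lt (le_max_right _ _) hn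
    have h3 : 1 / |y| < (n:ℝ) + 1 := by linarith
    rw [div_lt_iff₀ hpos] at h3
    rw [div_le_iff₀ (by positivity)]
    nlinarith
  · have := lt_of_le_of_lt (le_max_left (|y| - 1) _) hn; linarith

/-- If `∫ φ·G = ∫ φ` for all integrable `φ`, and `G` is measurable, then `G = 1` a.e. -/
lemma aux_ae_eq_one {α : Type*} [MeasurableSpace α] {μ : Measure α} [IsFiniteMeasure μ]
    {G : α → ℝ} (hG : Measurable G)
    (h : ∀ φ : α → ℝ, Integrable φ μ → ∫ x, φ x * G x ∂μ = ∫ x, φ x ∂μ) :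
    G =ᵐ[μ] fun _ => (1:ℝ) := by
  have main : ∀ E : Set α, MeasurableSet E → (∀ x ∈ E, ∀ y ∈ E, True) →
      (∀ x ∈ E, |G x - 1| ≤ (1:ℝ)) → True := fun _ _ _ _ => trivial
  -- generic step
  have step : ∀ (E : Set α), MeasurableSet E →
      (Integrable (fun x => G x) (μ.restrict E)) →
      (μ E).toReal = ∫ x in E, G x ∂μ := by
    intro E hEm hGint
    have hφ : Integrable (E.indicator (fun _ => (1:ℝ))) μ :=
      (integrable_const (1:ℝ)).indicator hEm
    have hval := h _ hφ
    have hind : ∀ x, E.indicator (fun _ => (1:ℝ)) x * G x = E.indicator G x := by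
      intro x
      by_cases hx : x ∈ E <;> simp [Set.indicator_of_mem, Set.indicator_of_notMem, hx]
    simp only [hind] at hval
    rw [integral_indicator hEm, integral_indicator hEm] at hval
    rw [hval, setIntegral_const, smul_eq_mul, mul_one, measureReal_def]
  have hGint : ∀ (E : Set α) (n : ℕ), (∀ x ∈ E, |G x - 1| ≤ (n:ℝ)+1) → MeasurableSet E →
      Integrable (fun x => G x) (μ.restrict E) := by
    intro E n hb hEm
    refine Integrable.mono' (integrable_const ((n:ℝ)+2)) hG.aestronglyMeasurable.restrict ?_
    filter_upwards [ae_restrict_mem hEm] with x hx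
    have := hb x hx
    rw [Real.norm_eq_abs]
    have := abs_sub_abs_le_abs_sub (G x) 1
    simp only [abs_one] at this
    linarith
  have keyP : ∀ n : ℕ, μ {x | G x - 1 ∈ Set.Icc (1/((n:ℝ)+1)) ((n:ℝ)+1)} = 0 := by
    intro n
    set E := {x | G x - 1 ∈ Set.Icc (1/((n:ℝ)+1)) ((n:ℝ)+1)} with hEdef
    have hEm : MeasurableSet E := (hG.sub measurable_const) measurableSet_Icc
    have hb : ∀ x ∈ E, |G x - 1| ≤ (n:ℝ)+1 := by
      intro x hx
      have h1 : (0:ℝ) < 1/((n:ℝ)+1) := by positivity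
      rw [abs_le]; exact ⟨by linarith [hx.1], hx.2⟩
    have hint := hGint E n hb hEm
    have heq := step E hEm hint
    have hge : ∫ x in E, G x ∂μ ≥ ∫ _ in E, (1 + 1/((n:ℝ)+1)) ∂μ := by
      refine setIntegral_mono_on (integrable_const _) hint hEm fun x hx => by linarith [hx.1]
    rw [setIntegral_const, smul_eq_mul, measureReal_def] at hge
    have h1 : (0:ℝ) < 1/((n:ℝ)+1) := by positivity
    have htr : (μ E).toReal = 0 := by nlinarith [ENNReal.toReal_nonneg (a := μ E)]
    exact (ENNReal.toReal_eq_zero_iff _).1 htr |>.resolve_right (measure_ne_top μ E)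
  have keyN : ∀ n : ℕ, μ {x | G x - 1 ∈ Set.Icc (-((n:ℝ)+1)) (-(1/((n:ℝ)+1)))} = 0 := by
    intro n
    set E := {x | G x - 1 ∈ Set.Icc (-((n:ℝ)+1)) (-(1/((n:ℝ)+1)))} with hEdef
    have hEm : MeasurableSet E := (hG.sub measurable_const) measurableSet_Icc
    have hb : ∀ x ∈ E, |G x - 1| ≤ (n:ℝ)+1 := by
      intro x hx
      have h1 : (0:ℝ) < 1/((n:ℝ)+1) := by positivity
      rw [abs_le]; exact ⟨hx.1, by linarith [hx.2]⟩
    have hint := hGint E n hb hEm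
    have heq := step E hEm hint
    have hle : ∫ x in E, G x ∂μ ≤ ∫ _ in E, (1 - 1/((n:ℝ)+1)) ∂μ := by
      refine setIntegral_mono_on hint (integrable_const _) hEm fun x hx => by linarith [hx.2]
    rw [setIntegral_const, smul_eq_mul, measureReal_def] at hle
    have h1 : (0:ℝ) < 1/((n:ℝ)+1) := by positivity
    have htr : (μ E).toReal = 0 := by nlinarith [ENNReal.toReal_nonneg (a := μ E)]
    exact (ENNReal.toReal_eq_zero_iff _).1 htr |>.resolve_right (measure_ne_top μ E)
  have hsub : {x | G x ≠ 1} ⊆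
      (⋃ n : ℕ, {x | G x - 1 ∈ Set.Icc (1/((n:ℝ)+1)) ((n:ℝ)+1)}) ∪
      (⋃ n : ℕ, {x | G x - 1 ∈ Set.Icc (-((n:ℝ)+1)) (-(1/((n:ℝ)+1)))}) := by
    intro x hx
    have hy : G x - 1 ≠ 0 := sub_ne_zero.2 hx
    obtain ⟨n, h1, h2⟩ := aux_exists_nat_abs hy
    rcases lt_or_gt_of_ne hy with hneg | hpos
    · right
      refine Set.mem_iUnion.2 ⟨n, ?_⟩
      rw [abs_of_neg hneg] at h1 h2
      exact ⟨by linarith, by linarith⟩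
    · left
      refine Set.mem_iUnion.2 ⟨n, ?_⟩
      rw [abs_of_pos hpos] at h1 h2
      exact ⟨h1, h2⟩
  have hnull : μ {x | G x ≠ 1} = 0 :=
    measure_mono_null hsub
      (measure_union_null (measure_iUnion_null keyP) (measure_iUnion_null keyN))
  filter_upwards [measure_eq_zero_iff_ae_notMem.1 hnull] with x hx
  exact not_not.1 (show ¬ G x ≠ 1 from hx)


lemma aux_signedMeasure_apply {X : Type*} [MeasurableSpace X] (s : SignedMeasure X) {A : Set X} (hA : MeasurableSet A) :
    s A = (s.toJordanDecomposition.posPart A).toReal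
        - (s.toJordanDecomposition.negPart A).toReal := by
  conv_lhs => rw [← s.toSignedMeasure_toJordanDecomposition]
  rw [MeasureTheory.JordanDecomposition.toSignedMeasure, VectorMeasure.sub_apply,
    Measure.toSignedMeasure_apply_measurable hA, Measure.toSignedMeasure_apply_measurable hA]
  simp only [measureReal_def]

lemma aux_signedIntegral_diff_bound {X : Type*} [MetricSpace X] [CompactSpace X] [MeasurableSpace X] [BorelSpace X] (s : SignedMeasure X) (f g : C(X, ℝ)) :
    |signedIntegral s f - signedIntegral s g| ≤
      dist f g * ((s.toJordanDecomposition.posPart Set.univ).toReal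
        + (s.toJordanDecomposition.negPart Set.univ).toReal) := by
  set p := s.toJordanDecomposition.posPart
  set n := s.toJordanDecomposition.negPart
  have hmain : ∀ μ : Measure X, IsFiniteMeasure μ →
      |(∫ z, f z ∂μ) - ∫ z, g z ∂μ| ≤ dist f g * (μ Set.univ).toReal := by
    intro μ hμ
    have h1 : (∫ z, f z ∂μ) - ∫ z, g z ∂μ = ∫ z, (f z - g z) ∂μ :=
      (integral_sub ((BoundedContinuousFunction.mkOfCompact f).integrable μ)
        ((BoundedContinuousFunction.mkOfCompact g).integrable μ)).symm
    rw [h1]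
    have := (BoundedContinuousFunction.mkOfCompact (f - g)).norm_integral_le_mul_norm μ
    simp only [BoundedContinuousFunction.norm_mkOfCompact] at this
    calc |∫ z, (f z - g z) ∂μ| ≤ (μ Set.univ).toReal * ‖f - g‖ := by
          simpa [BoundedContinuousFunction.mkOfCompact_apply, measureReal_def] using this
      _ = dist f g * (μ Set.univ).toReal := by rw [dist_eq_norm]; ring
  have hp := hmain p inferInstance
  have hn := hmain n inferInstance
  have : signedIntegral s f - signedIntegral s g
      = ((∫ z, f z ∂p) - ∫ z, g z ∂p) - ((∫ z, f z ∂n) - ∫ z, g z ∂n) := by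
    simp only [signedIntegral]; ring
  rw [this]
  calc |((∫ z, f z ∂p) - ∫ z, g z ∂p) - ((∫ z, f z ∂n) - ∫ z, g z ∂n)|
      ≤ |(∫ z, f z ∂p) - ∫ z, g z ∂p| + |(∫ z, f z ∂n) - ∫ z, g z ∂n| := abs_sub _ _
    _ ≤ dist f g * (p Set.univ).toReal + dist f g * (n Set.univ).toReal := add_le_add hp hn
    _ = dist f g * ((p Set.univ).toReal + (n Set.univ).toReal) := by ring

/-- If the signed integral of every nonnegative continuous function is nonnegative,
the negative part of the Jordan decomposition vanishes. -/
lemma aux_negPart_eq_zero {X : Type*} [MetricSpace X] [CompactSpace X] [MeasurableSpace X] [BorelSpace X] (s : SignedMeasure X)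
    (h : ∀ f : C(X, ℝ), (∀ z, 0 ≤ f z) → 0 ≤ signedIntegral s f) :
    s.toJordanDecomposition.negPart = 0 := by
  set p := s.toJordanDecomposition.posPart with hp
  set n := s.toJordanDecomposition.negPart with hn
  obtain ⟨B, hBm, hpB, hnBc⟩ := s.toJordanDecomposition.mutuallySingular
  have hK0 : ∀ K : Set X, IsCompact K → K ⊆ B → n K = 0 := by
    intro K hK hKB
    have hKm : MeasurableSet K := hK.isClosed.measurableSet
    have htoReal : ∀ ε : ℝ, 0 < ε → (n K).toReal ≤ ε := by
      intro ε hε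
      have hpK : p K = 0 := le_antisymm (hpB ▸ measure_mono hKB) zero_le
      obtain ⟨U, hKU, hUo, hpU⟩ := K.exists_isOpen_lt_of_lt (ENNReal.ofReal ε)
        (by rw [hpK]; exact ENNReal.ofReal_pos.2 hε)
      obtain ⟨f, hf0, hf1, hf01⟩ := exists_continuous_zero_one_of_isClosed
        (isClosed_compl_iff.2 hUo) hK.isClosed
        (Set.disjoint_left.2 fun z hz hzK => hz (hKU hzK))
      have hfnn : ∀ z, 0 ≤ f z := fun z => (hf01 z).1
      have hsf := h f hfnn
      have hfn_int : Integrable f n := (BoundedContinuousFunction.mkOfCompact f).integrable n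
      have hfp_int : Integrable f p := (BoundedContinuousFunction.mkOfCompact f).integrable p
      -- lower bound for ∫ f dn
      have h2 : (n K).toReal ≤ ∫ z, f z ∂n := by
        have he : ∫ z in K, f z ∂n = ∫ _ in K, (1:ℝ) ∂n := setIntegral_congr_fun hKm hf1
        have : (n K).toReal = ∫ z in K, f z ∂n := by
          rw [he, setIntegral_const, smul_eq_mul, mul_one, measureReal_def]
        rw [this]
        exact setIntegral_le_integral hfn_int (Eventually.of_forall hfnn)
      -- upper bound for ∫ f dp
      have h3 : ∫ z, f z ∂p ≤ ε := by
        have hsplit : ∫ z, f z ∂p = (∫ z in U, f z ∂p) + ∫ z in Uᶜ, f z ∂p :=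
          (integral_add_compl hUo.measurableSet hfp_int).symm
        have hUc : ∫ z in Uᶜ, f z ∂p = 0 := by
          rw [setIntegral_congr_fun hUo.measurableSet.compl (fun z hz => hf0 hz)]
          simp
        have hU : ∫ z in U, f z ∂p ≤ (p U).toReal := by
          have := setIntegral_mono_on (hfp_int.integrableOn) (integrable_const (1:ℝ))
            hUo.measurableSet (fun z _ => (hf01 z).2)
          rw [setIntegral_const, smul_eq_mul, mul_one] at this
          exact this
        have : (p U).toReal ≤ ε :=
          le_of_lt (ENNReal.toReal_lt_of_lt_ofReal hpU)
        rw [hsplit, hUc, add_zero]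
        linarith [hU]
      have : ∫ z, f z ∂n ≤ ∫ z, f z ∂p := by
        have := hsf; simp only [signedIntegral] at this; linarith
      linarith [h2, h3]
    have : (n K).toReal ≤ 0 := le_of_forall_pos_le_add (by intro ε hε; simpa using htoReal ε hε)
    have h0 : (n K).toReal = 0 := le_antisymm this ENNReal.toReal_nonneg
    exact ((ENNReal.toReal_eq_zero_iff _).1 h0).resolve_right (measure_ne_top n K)
  have hnB : n B = 0 := by
    by_contra hne
    obtain ⟨K, hKB, hKc, hKpos⟩ :=
      (Measure.InnerRegular.innerRegular (μ := n)) hBm 0 (pos_iff_ne_zero.2 hne)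
    exact absurd (hK0 K hKc hKB) (by simpa using hKpos.ne')
  have huniv : n Set.univ = 0 := by
    have := measure_add_measure_compl (μ := n) hBm
    rw [hnB, hnBc, add_zero] at this
    exact this.symm
  exact Measure.measure_univ_eq_zero.mp huniv

/-- Let `u^k : Ω → P(X)` be weakly measurable and `u^∞ : Ω → M(X)` a
weakly* measurable function into the finite signed Borel measures on `X` such that
`∫_Ω φ(x) ∫_X f d(u^k x) dx → ∫_Ω φ(x) ∫_X f d(u^∞ x) dx` for all `φ ∈ L¹(Ω)` and
`f ∈ C(X)`. Then for a.e. `x ∈ Ω`, `u^∞ x` is a nonnegative measure of total mass `1`,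
i.e. `u^∞ x ∈ P(X)` almost everywhere. -/
theorem stmt16 {d : ℕ} (Ω : Set (EuclideanSpace ℝ (Fin d)))
    (hΩo : IsOpen Ω) (hΩb : Bornology.IsBounded Ω)
    (X : Type*) [MetricSpace X] [CompactSpace X] [MeasurableSpace X] [BorelSpace X]
    (u : ℕ → Ω → ProbabilityMeasure X)
    (hu : ∀ (k : ℕ) (f : C(X, ℝ)), Measurable fun x : Ω => ∫ z, f z ∂(u k x : Measure X))
    (uinf : Ω → MeasureTheory.SignedMeasure X)
    (huinf : ∀ f : C(X, ℝ), Measurable fun x : Ω => signedIntegral (uinf x) f)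
    (hconv : ∀ (φ : Ω → ℝ), Integrable φ (volume : Measure Ω) → ∀ f : C(X, ℝ),
      Tendsto (fun k => ∫ x : Ω, φ x * ∫ z, f z ∂(u k x : Measure X)) atTop
        (𝓝 (∫ x : Ω, φ x * signedIntegral (uinf x) f))) :
    ∀ᵐ x : Ω ∂(volume : Measure Ω),
      (∀ A : Set X, MeasurableSet A → 0 ≤ uinf x A) ∧ uinf x Set.univ = 1 := by
  haveI : IsFiniteMeasure (volume : Measure Ω) := by
    constructor
    rw [Measure.Subtype.volume_univ hΩo.measurableSet.nullMeasurableSet]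
    exact hΩb.measure_lt_top
  obtain ⟨D, hDc, hDd⟩ := TopologicalSpace.exists_countable_dense C(X, ℝ)
  -- a.e. nonnegativity of the signed integral against `g ⊔ 0` for every `g ∈ D`
  have hae1 : ∀ g ∈ D, ∀ᵐ x : Ω ∂(volume : Measure Ω),
      0 ≤ signedIntegral (uinf x) (g ⊔ 0) := by
    intro g _
    refine aux_ae_nonneg (huinf (g ⊔ 0)) (fun k x => ?_) (fun φ hφ => hconv φ hφ (g ⊔ 0))
    exact integral_nonneg fun z => by
      simp only [ContinuousMap.sup_apply, ContinuousMap.zero_apply]; exact le_sup_right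
  have haeD : ∀ᵐ x : Ω ∂(volume : Measure Ω),
      ∀ g ∈ D, 0 ≤ signedIntegral (uinf x) (g ⊔ 0) := (ae_ball_iff hDc).2 hae1
  -- a.e. the mass is one
  have hae2 : ∀ᵐ x : Ω ∂(volume : Measure Ω),
      signedIntegral (uinf x) ((1 : C(X, ℝ)) : X → ℝ) = 1 := by
    have := aux_ae_eq_one (μ := (volume : Measure Ω)) (huinf 1) ?_
    · filter_upwards [this] with x hx using hx
    · intro φ hφ
      have h1 := hconv φ hφ 1
      have heq : (fun k : ℕ => ∫ x : Ω, φ x * ∫ z, (1 : C(X, ℝ)) z ∂(u k x : Measure X))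
          = fun _ : ℕ => ∫ x : Ω, φ x := by
        funext k
        congr 1
        funext x
        haveI : IsProbabilityMeasure ((u k x : Measure X)) := (u k x).instIsProbabilityMeasureToMeasure
        simp
      rw [heq] at h1
      exact tendsto_nhds_unique h1 tendsto_const_nhds
  filter_upwards [haeD, hae2] with x hx1 hx2
  set s := uinf x with hs
  -- nonnegativity against all nonneg continuous functions
  have hnonneg : ∀ f : C(X, ℝ), (∀ z, 0 ≤ f z) → 0 ≤ signedIntegral s f := by
    intro f hf
    set C := (s.toJordanDecomposition.posPart Set.univ).toReal
      + (s.toJordanDecomposition.negPart Set.univ).toReal with hC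
    have hC0 : 0 ≤ C := by positivity
    have key : ∀ ε : ℝ, 0 < ε → -(signedIntegral s f) ≤ ε * C := by
      intro ε hε
      obtain ⟨g, hgb, hgD⟩ := Metric.dense_iff.1 hDd f ε hε
      have hd : dist (g ⊔ 0) f ≤ dist g f := by
        rw [ContinuousMap.dist_le dist_nonneg]
        intro z
        have h1 : dist (g z) (f z) ≤ dist g f := ContinuousMap.dist_apply_le_dist z
        have h2 : f z = max (f z) 0 := (max_eq_left (hf z)).symm
        calc dist ((g ⊔ 0) z) (f z) = |max (g z) 0 - max (f z) 0| := by
              rw [ContinuousMap.sup_apply, ContinuousMap.zero_apply, ← h2, Real.dist_eq]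
          _ ≤ |g z - f z| := abs_max_sub_max_le_abs _ _ _
          _ ≤ dist g f := by rw [← Real.dist_eq]; exact h1
      have hbound := aux_signedIntegral_diff_bound s (g ⊔ 0) f
      have hpos := hx1 g hgD
      have hdist : dist (g ⊔ 0) f ≤ ε := le_trans hd (Metric.mem_ball.1 hgb).le
      rw [ContinuousMap.coe_sup, ContinuousMap.coe_zero] at hbound
      have : |signedIntegral s (⇑g ⊔ 0) - signedIntegral s f| ≤ ε * C :=
        le_trans hbound (by
          rw [hC]
          exact mul_le_mul_of_nonneg_right hdist (by positivity))
      have := abs_le.1 this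
      linarith [this.2]
    have : ∀ δ : ℝ, 0 < δ → -(signedIntegral s f) ≤ δ := by
      intro δ hδ
      have h1 := key (δ / (C + 1)) (by positivity)
      have h2 : δ / (C + 1) * C ≤ δ := by
        rw [div_mul_eq_mul_div, div_le_iff₀ (by linarith)]
        nlinarith
      linarith
    have : -(signedIntegral s f) ≤ 0 :=
      le_of_forall_pos_le_add (by intro ε hε; simpa using this ε hε)
    linarith
  have hneg : s.toJordanDecomposition.negPart = 0 := aux_negPart_eq_zero s hnonneg
  have hone : (s.toJordanDecomposition.posPart Set.univ).toReal = 1 := by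
    have h1 : signedIntegral s ((1 : C(X, ℝ)) : X → ℝ)
        = (s.toJordanDecomposition.posPart Set.univ).toReal := by
      simp [signedIntegral, hneg, measureReal_def]
    rw [← h1]; exact hx2
  constructor
  · intro A hA
    rw [aux_signedMeasure_apply s hA, hneg]
    simp
  · rw [aux_signedMeasure_apply s MeasurableSet.univ, hneg, hone]
    simp
end
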